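/- Let S be a compact topological semigroup given as the inverse limit of an inverse system of finite semigroups Sₙ with surjective continuous connecting homomorphisms π_{m,n} : S_m → S_n (m ≥ n) indexed by natural numbers, with projections πₙ : S → Sₙ. Suppose u,v,x,y ∈ S are such that for every n there exists tₙ ∈ Sₙ¹ with πₙ(u)tₙ = πₙ(x) and πₙ(v) = tₙπₙ(y). Then there exists t ∈ S¹ with ut = x and v = ty. -/

import Mathlib

private lemma ultra_pigeonhole {β : Type*} [Finite β] (U : Ultrafilter ℕ) (f : ℕ → β) :
    ∃ b : β, {m | f m = b} ∈ U := by
  obtain ⟨b, hb⟩ := (U.map f).eq_pure_of_finite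
  refine ⟨b, ?_⟩
  have : {b} ∈ U.map f := by rw [hb]; exact Ultrafilter.mem_pure.mpr rfl
  simpa [Ultrafilter.mem_map, Set.preimage, Set.mem_singleton_iff] using this

private lemma withone_eq_one_or {α : Type*} (t : WithOne α) :
    t = 1 ∨ ∃ a : α, (a : WithOne α) = t := by
  by_cases h : t = 1
  · exact Or.inl h
  · exact Or.inr (WithOne.ne_one_iff_exists.mp h)

private lemma withone_map_mul' {α β : Type*} [Mul α] [Mul β] (f : α →ₙ* β) (a b : WithOne α) :
    WithOne.map f (a * b) = WithOne.map f a * WithOne.map f b := by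
  rcases withone_eq_one_or a with rfl | ⟨a, rfl⟩ <;>
    rcases withone_eq_one_or b with rfl | ⟨b, rfl⟩
  · rfl
  · rfl
  · rfl
  · rw [← WithOne.coe_mul, WithOne.map_coe, WithOne.map_coe, WithOne.map_coe, map_mul,
      WithOne.coe_mul]

theorem inverse_limit_divisibility {S : Type*} [Semigroup S]
    (Sn : ℕ → Type*) [∀ n, Semigroup (Sn n)] [∀ n, Finite (Sn n)]
    (π : ∀ m n, n ≤ m → (Sn m →ₙ* Sn n))
    (hπsurj : ∀ m n (h : n ≤ m), Function.Surjective (π m n h))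
    (hππ : ∀ k m n (h1 : m ≤ k) (h2 : n ≤ m) (s : Sn k),
      π m n h2 (π k m h1 s) = π k n (h2.trans h1) s)
    (p : ∀ n, S →ₙ* Sn n)
    (hpsurj : ∀ n, Function.Surjective (p n))
    (hcomp : ∀ m n (h : n ≤ m) (s : S), π m n h (p m s) = p n s)
    (hsep : ∀ s s' : S, (∀ n, p n s = p n s') → s = s')
    (hlim : ∀ f : ∀ n, Sn n, (∀ m n (h : n ≤ m), π m n h (f m) = f n) →
      ∃ s : S, ∀ n, p n s = f n)
    (u v x y : S)
    (ht : ∀ n, ∃ t : WithOne (Sn n),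
      (p n u : WithOne (Sn n)) * t = (p n x : WithOne (Sn n)) ∧
      (p n v : WithOne (Sn n)) = t * (p n y : WithOne (Sn n))) :
    ∃ t : WithOne S, (u : WithOne S) * t = (x : WithOne S) ∧
      (v : WithOne S) = t * (y : WithOne S) := by
  classical
  -- chosen witnesses at each level
  set ts : ∀ m, WithOne (Sn m) := fun m => (ht m).choose with hts
  have hts1 : ∀ m, (p m u : WithOne (Sn m)) * ts m = (p m x : WithOne (Sn m)) :=
    fun m => (ht m).choose_spec.1
  have hts2 : ∀ m, (p m v : WithOne (Sn m)) = ts m * (p m y : WithOne (Sn m)) :=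
    fun m => (ht m).choose_spec.2
  -- projected witnesses
  set g : ∀ m n, WithOne (Sn n) := fun m n =>
    if h : n ≤ m then WithOne.map (π m n h) (ts m) else 1 with hg
  have hgdef : ∀ m n (h : n ≤ m), g m n = WithOne.map (π m n h) (ts m) := by
    intro m n h; simp [hg, h]
  set U : Ultrafilter ℕ := Filter.hyperfilter ℕ with hU
  have hUtail : ∀ m : ℕ, {k | m ≤ k} ∈ U := by
    intro m
    have hfin : ({k : ℕ | m ≤ k}ᶜ : Set ℕ).Finite := by
      have : ({k : ℕ | m ≤ k}ᶜ : Set ℕ) = Set.Iio m := by ext k; simp [not_le]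
      rw [this]; exact Set.finite_Iio m
    have := Filter.compl_mem_hyperfilter_of_finite hfin
    rwa [compl_compl] at this
  -- limit values
  have ha : ∀ n, ∃ a : WithOne (Sn n), {m | g m n = a} ∈ U := fun n => by
    haveI : Fintype (Sn n) := Fintype.ofFinite _
    haveI : Finite (WithOne (Sn n)) := inferInstanceAs (Finite (Option (Sn n)))
    exact ultra_pigeonhole U (fun m => g m n)
  set a : ∀ n, WithOne (Sn n) := fun n => (ha n).choose with haa
  have haU : ∀ n, {m | g m n = a n} ∈ U := fun n => (ha n).choose_spec
  -- compatibility of the limit values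
  have hacomp : ∀ m n (h : n ≤ m), WithOne.map (π m n h) (a m) = a n := by
    intro m n h
    have hk : ({k | m ≤ k} ∩ ({k | g k m = a m} ∩ {k | g k n = a n})) ∈ U :=
      Filter.inter_mem (hUtail m) (Filter.inter_mem (haU m) (haU n))
    obtain ⟨k, hk1, hk2, hk3⟩ := Ultrafilter.nonempty_of_mem hk
    have hk2' : g k m = a m := hk2
    have hk3' : g k n = a n := hk3
    rw [← hk2', ← hk3', hgdef k m hk1, hgdef k n (h.trans hk1)]
    rcases withone_eq_one_or (ts k) with h1 | ⟨s, hsk⟩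
    · rw [h1]; simp
    · rw [← hsk]; simp only [WithOne.map_coe]
      rw [WithOne.coe_inj]; exact hππ k m n hk1 h s
  -- dichotomy
  by_cases hone : ∀ n, a n = 1
  · -- all ones: then ts m = 1 along U, so u = x, v = y
    have key : ∀ n, p n u = p n x ∧ p n v = p n y := by
      intro n
      have hk : ({k | n ≤ k} ∩ {k | g k n = a n}) ∈ U :=
        Filter.inter_mem (hUtail n) (haU n)
      obtain ⟨k, hk1, hk2⟩ := Ultrafilter.nonempty_of_mem hk
      have hk2' : g k n = a n := hk2
      have hts_one : ts k = 1 := by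
        rw [hgdef k n hk1, hone n] at hk2'
        rcases withone_eq_one_or (ts k) with h1 | ⟨s, hsk⟩
        · exact h1
        · rw [← hsk, WithOne.map_coe] at hk2'
          exact absurd hk2' WithOne.coe_ne_one
      have h1 : p k u = p k x := by
        have := hts1 k; rw [hts_one, mul_one] at this
        exact WithOne.coe_inj.mp this
      have h2 : p k v = p k y := by
        have := hts2 k; rw [hts_one, one_mul] at this
        exact WithOne.coe_inj.mp (this.symm) |>.symm
      constructor
      · rw [← hcomp k n hk1 u, ← hcomp k n hk1 x, h1]
      · rw [← hcomp k n hk1 v, ← hcomp k n hk1 y, h2]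
    have hux : u = x := hsep u x fun n => (key n).1
    have hvy : v = y := hsep v y fun n => (key n).2
    exact ⟨1, by rw [mul_one, hux], by rw [one_mul, hvy]⟩
  · -- some a n₀ ≠ 1; then all a n ≠ 1
    push_neg at hone
    obtain ⟨n₀, hn₀⟩ := hone
    have hne : ∀ n, a n ≠ 1 := by
      intro n
      rcases le_total n n₀ with h | h
      · intro hn1
        apply hn₀
        rw [← hacomp n₀ n h] at hn1
        rcases withone_eq_one_or (a n₀) with h1 | ⟨s, hsk⟩
        · exact h1
        · rw [← hsk, WithOne.map_coe] at hn1
          exact absurd hn1 WithOne.coe_ne_one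
      · intro hn1
        apply hn₀
        rw [← hacomp n n₀ h, hn1]; simp
    set b : ∀ n, Sn n := fun n => (WithOne.ne_one_iff_exists.mp (hne n)).choose with hb
    have hba : ∀ n, (b n : WithOne (Sn n)) = a n :=
      fun n => (WithOne.ne_one_iff_exists.mp (hne n)).choose_spec
    have hbcomp : ∀ m n (h : n ≤ m), π m n h (b m) = b n := by
      intro m n h
      have := hacomp m n h
      rw [← hba m, ← hba n, WithOne.map_coe] at this
      exact WithOne.coe_inj.mp this
    obtain ⟨s, hs⟩ := hlim b hbcomp
    -- equations at each level
    have key : ∀ n, p n u * b n = p n x ∧ p n v = b n * p n y := by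
      intro n
      have hk : ({k | n ≤ k} ∩ {k | g k n = a n}) ∈ U :=
        Filter.inter_mem (hUtail n) (haU n)
      obtain ⟨k, hk1, hk2⟩ := Ultrafilter.nonempty_of_mem hk
      have hk2' : g k n = a n := hk2
      have e1 : (p n u : WithOne (Sn n)) * g k n = (p n x : WithOne (Sn n)) := by
        have := congrArg (WithOne.map (π k n hk1)) (hts1 k)
        simpa [withone_map_mul', WithOne.map_coe, hcomp k n hk1, hgdef k n hk1] using this
      have e2 : (p n v : WithOne (Sn n)) = g k n * (p n y : WithOne (Sn n)) := by
        have := congrArg (WithOne.map (π k n hk1)) (hts2 k)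
        simpa [withone_map_mul', WithOne.map_coe, hcomp k n hk1, hgdef k n hk1] using this
      rw [hk2', ← hba n] at e1 e2
      constructor
      · exact WithOne.coe_inj.mp (by rw [WithOne.coe_mul]; exact e1)
      · exact WithOne.coe_inj.mp (by rw [WithOne.coe_mul]; exact e2.symm) |>.symm
    have hux : u * s = x := hsep _ _ fun n => by
      rw [map_mul, hs n]; exact (key n).1
    have hvy : v = s * y := hsep _ _ fun n => by
      rw [map_mul, hs n]; exact (key n).2
    exact ⟨(s : WithOne S), by rw [← WithOne.coe_mul, hux],
      by rw [← WithOne.coe_mul, ← hvy]⟩
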